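/- Let w1 and w2 be elements of W^S of equal length, l(w1) = l(w2). Then w1.0 − w2.0 lies in the sublattice Q_S = ℤS of the root lattice. (Corollary on incomparability of the weights w.0, part 1; it reflects that w1.0 and w2.0 both occur as weights of Λ^{l(w1)}(g/p_S) when g/p_S is irreducible.) -/

import Mathlib

open scoped RealInnerProductSpace

noncomputable section

/-- The pairing of a weight with the coroot `β^∨ = 2β/(β,β)` of a vector `β`:
`⟨lam, β^∨⟩ = 2(lam,β)/(β,β)`. -/
def copair {V : Type*} [NormedAddCommGroup V] [InnerProductSpace ℝ V] (lam β : V) : ℝ :=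
  2 * ⟪lam, β⟫ / ⟪β, β⟫

/-- A finite reduced crystallographic root system together with a fixed base of
simple roots, realized in a finite-dimensional real inner product space. -/
structure BasedRootSystem (V : Type*) [NormedAddCommGroup V] [InnerProductSpace ℝ V]
    [FiniteDimensional ℝ V] where
  /-- the (finite) set of roots -/
  roots : Finset V
  /-- the number of simple roots -/
  rank : ℕ
  /-- the simple roots; they form a basis of the ambient space -/
  b : Module.Basis (Fin rank) ℝ V
  simple_mem : ∀ i, b i ∈ roots
  zero_not_mem : (0 : V) ∉ roots
  /-- the root system is reduced -/
  reduced : ∀ β ∈ roots, ∀ c : ℝ, c • β ∈ roots → c = 1 ∨ c = -1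
  /-- the root system is crystallographic -/
  crystallographic : ∀ β ∈ roots, ∀ γ ∈ roots, ∃ n : ℤ, copair β γ = (n : ℝ)
  /-- the set of roots is stable under the reflection in (the hyperplane orthogonal to)
  any root -/
  reflect_mem : ∀ β ∈ roots, ∀ γ ∈ roots, Submodule.reflection ((ℝ ∙ β)ᗮ) γ ∈ roots
  /-- each root is an integral linear combination of the simple roots -/
  coeff_int : ∀ β ∈ roots, ∀ i, ∃ n : ℤ, b.repr β i = (n : ℝ)
  /-- each root has either all coefficients nonnegative or all nonpositive -/
  coeff_sign : ∀ β ∈ roots, (∀ i, 0 ≤ b.repr β i) ∨ (∀ i, b.repr β i ≤ 0)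

namespace BasedRootSystem

variable {V : Type*} [NormedAddCommGroup V] [InnerProductSpace ℝ V] [FiniteDimensional ℝ V]
variable (P : BasedRootSystem V)

/-- the set `R⁺` of positive roots -/
def posRoots : Finset V :=
  (P.roots.finite_toSet.inter_of_left {β | ∀ i, 0 ≤ P.b.repr β i}).toFinset

/-- `ρ`, half the sum of the positive roots -/
def rho : V := (2 : ℝ)⁻¹ • ∑ β ∈ P.posRoots, β

/-- the simple reflection corresponding to the simple root `b i` -/
def sr (i : Fin P.rank) : V ≃ₗᵢ[ℝ] V := Submodule.reflection ((ℝ ∙ P.b i)ᗮ)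

/-- the Weyl group, generated by the simple reflections -/
def weylGroup : Subgroup (V ≃ₗᵢ[ℝ] V) := Subgroup.closure (Set.range P.sr)

/-- the length of a Weyl group element: the minimal number of factors in an
expression as a product of simple reflections -/
def len (w : V ≃ₗᵢ[ℝ] V) : ℕ :=
  sInf {n | ∃ f : Fin n → Fin P.rank, w = (List.ofFn fun k => P.sr (f k)).prod}

/-- the shifted (dot) action on the zero weight: `w.0 = wρ - ρ` -/
def dotZero (w : V ≃ₗᵢ[ℝ] V) : V := w P.rho - P.rho

/-- the sublattice `Q_S ⊆ Q` generated by the simple roots indexed by `S` -/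
def QS (S : Set (Fin P.rank)) : AddSubgroup V := AddSubgroup.closure (P.b '' S)

/-- the positive cone `Q⁺` of nonnegative integer combinations of simple roots -/
def Qplus : AddSubmonoid V := AddSubmonoid.closure (Set.range P.b)

/-- `W^S = {w ∈ W | R_S^+ ⊆ w R^+}` -/
def WS (S : Set (Fin P.rank)) : Set (V ≃ₗᵢ[ℝ] V) :=
  {w | w ∈ P.weylGroup ∧
    ∀ β ∈ P.posRoots, β ∈ P.QS S → ∃ γ ∈ P.posRoots, w γ = β}

/-- irreducibility of the root system: the base cannot be partitioned into two
nonempty mutually orthogonal subsets -/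
def Irred : Prop :=
  ∀ A B : Set (Fin P.rank), A ∪ B = Set.univ →
    (∀ i ∈ A, ∀ j ∈ B, ⟪P.b i, P.b j⟫ = 0) → A = ∅ ∨ B = ∅

/-- the weight lattice `P` -/
def weights : Set V := {lam | ∀ i, ∃ n : ℤ, copair lam (P.b i) = (n : ℝ)}

/-- the dominant integral weights `P⁺` -/
def domWeights : Set V := {lam | lam ∈ P.weights ∧ ∀ i, 0 ≤ copair lam (P.b i)}

/-- the weights `P_S^+` which are dominant and integral with respect to `S` -/
def domWeightsS (S : Set (Fin P.rank)) : Set V :=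
  {lam | lam ∈ P.weights ∧ ∀ i ∈ S, 0 ≤ copair lam (P.b i)}

end BasedRootSystem

namespace BasedRootSystem

section Aux

variable {V : Type*} [NormedAddCommGroup V] [InnerProductSpace ℝ V] [FiniteDimensional ℝ V]
variable (P : BasedRootSystem V)

lemma b_ne_zero (i : Fin P.rank) : P.b i ≠ 0 := fun h => P.zero_not_mem (h ▸ P.simple_mem i)

lemma mem_posRoots {β : V} :
    β ∈ P.posRoots ↔ β ∈ P.roots ∧ ∀ i, 0 ≤ P.b.repr β i := by
  simp [posRoots, Set.Finite.mem_toFinset, Set.mem_inter_iff]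

lemma root_of_pos {β : V} (h : β ∈ P.posRoots) : β ∈ P.roots := (P.mem_posRoots.1 h).1

lemma reflection_formula {β : V} (hβ : β ≠ 0) (x : V) :
    Submodule.reflection ((ℝ ∙ β)ᗮ) x = x - copair x β • β := by
  rw [Submodule.reflection_orthogonal_apply, Submodule.reflection_singleton_apply, copair, real_inner_comm x β]
  simp only [RCLike.ofReal_real_eq_id, id_eq]
  rw [← real_inner_self_eq_norm_sq, two_smul]
  module

lemma neg_mem_roots {β : V} (h : β ∈ P.roots) : -β ∈ P.roots := by
  have := P.reflect_mem β h β h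
  rwa [Submodule.reflection_mem_subspace_orthogonalComplement_eq_neg
    (Submodule.le_orthogonal_orthogonal _ (Submodule.mem_span_singleton_self β))] at this

lemma pos_or_neg {β : V} (h : β ∈ P.roots) : β ∈ P.posRoots ∨ -β ∈ P.posRoots := by
  rcases P.coeff_sign β h with h1 | h1
  · exact Or.inl (P.mem_posRoots.2 ⟨h, h1⟩)
  · refine Or.inr (P.mem_posRoots.2 ⟨P.neg_mem_roots h, fun i => ?_⟩)
    rw [map_neg]; simpa using h1 i

lemma not_pos_and_neg {β : V} (h1 : β ∈ P.posRoots) (h2 : -β ∈ P.posRoots) : False := by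
  have hβ : β ≠ 0 := fun h => P.zero_not_mem (h ▸ P.root_of_pos h1)
  apply hβ
  have : ∀ i, P.b.repr β i = 0 := by
    intro i
    have a := (P.mem_posRoots.1 h1).2 i
    have b := (P.mem_posRoots.1 h2).2 i
    rw [map_neg] at b
    simp at b
    linarith
  have : P.b.repr β = 0 := Finsupp.ext this
  simpa using congrArg P.b.repr.symm this

lemma neg_pos_of_not_pos {β : V} (h : β ∈ P.roots) (h2 : β ∉ P.posRoots) : -β ∈ P.posRoots :=
  (P.pos_or_neg h).resolve_left h2

end Aux

end BasedRootSystem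
namespace BasedRootSystem
section Aux2
variable {V : Type*} [NormedAddCommGroup V] [InnerProductSpace ℝ V] [FiniteDimensional ℝ V]
variable (P : BasedRootSystem V)

lemma sr_apply (i : Fin P.rank) (x : V) : P.sr i x = x - copair x (P.b i) • P.b i :=
  reflection_formula (P.b_ne_zero i) x

lemma sr_b_self (i : Fin P.rank) : P.sr i (P.b i) = -(P.b i) :=
  Submodule.reflection_mem_subspace_orthogonalComplement_eq_neg
    (Submodule.le_orthogonal_orthogonal _ (Submodule.mem_span_singleton_self _))

lemma sr_sr (i : Fin P.rank) (x : V) : P.sr i (P.sr i x) = x := Submodule.reflection_reflection _ x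

lemma sr_mul_self (i : Fin P.rank) : P.sr i * P.sr i = 1 := by
  ext x; exact P.sr_sr i x

lemma sr_inv (i : Fin P.rank) : (P.sr i)⁻¹ = P.sr i :=
  eq_inv_of_mul_eq_one_left (P.sr_mul_self i)

lemma sr_mem (i : Fin P.rank) : P.sr i ∈ P.weylGroup :=
  Subgroup.subset_closure ⟨i, rfl⟩

lemma b_pos (i : Fin P.rank) : P.b i ∈ P.posRoots := by
  refine P.mem_posRoots.2 ⟨P.simple_mem i, fun j => ?_⟩
  rw [Module.Basis.repr_self, Finsupp.single_apply]
  split <;> norm_num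

lemma sr_repr (i : Fin P.rank) {β : V} (j : Fin P.rank) (hj : j ≠ i) :
    P.b.repr (P.sr i β) j = P.b.repr β j := by
  rw [P.sr_apply, map_sub, map_smul]
  simp [Module.Basis.repr_self, Finsupp.single_apply, hj.symm]

/-- simple reflection permutes the positive roots other than `b i` -/
lemma sr_pos {i : Fin P.rank} {β : V} (hβ : β ∈ P.posRoots) (hne : β ≠ P.b i) :
    P.sr i β ∈ P.posRoots ∧ P.sr i β ≠ P.b i := by
  obtain ⟨hr, hpos⟩ := P.mem_posRoots.1 hβ
  have hroot : P.sr i β ∈ P.roots := P.reflect_mem _ (P.simple_mem i) _ hr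
  have hj : ∃ j, j ≠ i ∧ 0 < P.b.repr β j := by
    by_contra hcon
    push_neg at hcon
    have hzero : ∀ j, j ≠ i → P.b.repr β j = 0 := fun j hji => le_antisymm (hcon j hji) (hpos j)
    have hβeq : β = P.b.repr β i • P.b i :=
      calc β = ∑ j, P.b.repr β j • P.b j := (P.b.sum_repr β).symm
      _ = P.b.repr β i • P.b i := Finset.sum_eq_single_of_mem i (Finset.mem_univ i)
          (fun j _ hji => by rw [hzero j hji, zero_smul])
    rcases P.reduced (P.b i) (P.simple_mem i) (P.b.repr β i) (hβeq ▸ hr) with h1 | h1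
    · exact hne (by rw [hβeq, h1, one_smul])
    · have := hpos i; rw [h1] at this; linarith
  obtain ⟨j, hji, hjpos⟩ := hj
  have hrep : P.b.repr (P.sr i β) j = P.b.repr β j := P.sr_repr i j hji
  have hp : P.sr i β ∈ P.posRoots := by
    rcases P.coeff_sign _ hroot with h | h
    · exact P.mem_posRoots.2 ⟨hroot, h⟩
    · exfalso; have := h j; rw [hrep] at this; linarith
  refine ⟨hp, fun h => ?_⟩
  have hβe : β = -(P.b i) := by
    have h2 := congrArg (P.sr i) h
    rwa [P.sr_sr, P.sr_b_self] at h2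
  rw [hβe] at hβ
  exact P.not_pos_and_neg (P.b_pos i) (by simpa using hβ)

lemma eq_b_of_sr_not_pos {i : Fin P.rank} {β : V} (hβ : β ∈ P.posRoots)
    (h : P.sr i β ∉ P.posRoots) : β = P.b i := by
  by_contra hne
  exact h (P.sr_pos hβ hne).1

/-- every element of the Weyl group maps roots to roots -/
lemma weyl_maps_roots {w : V ≃ₗᵢ[ℝ] V} (hw : w ∈ P.weylGroup) :
    ∀ β ∈ P.roots, w β ∈ P.roots := by
  have key : ∀ w ∈ P.weylGroup, (∀ β ∈ P.roots, w β ∈ P.roots) ∧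
      (∀ β ∈ P.roots, w⁻¹ β ∈ P.roots) := by
    intro w hw
    induction hw using Subgroup.closure_induction with
    | mem x hx =>
      obtain ⟨i, rfl⟩ := hx
      constructor
      · exact fun β hβ => P.reflect_mem _ (P.simple_mem i) _ hβ
      · rw [P.sr_inv]; exact fun β hβ => P.reflect_mem _ (P.simple_mem i) _ hβ
    | one => exact ⟨fun β hβ => hβ, fun β hβ => by simpa using hβ⟩
    | mul x y _ _ hx hy =>
      refine ⟨fun β hβ => ?_, fun β hβ => ?_⟩
      · exact hx.1 _ (hy.1 _ hβ)
      · rw [mul_inv_rev]; exact hy.2 _ (hx.2 _ hβ)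
    | inv x _ hx => exact ⟨fun β hβ => hx.2 _ hβ, fun β hβ => by simpa using hx.1 _ hβ⟩
  exact (key w hw).1

end Aux2
end BasedRootSystem
namespace BasedRootSystem
section Aux3
variable {V : Type*} [NormedAddCommGroup V] [InnerProductSpace ℝ V] [FiniteDimensional ℝ V]
variable (P : BasedRootSystem V)

lemma mulApp (f g : V ≃ₗᵢ[ℝ] V) (x : V) : (f * g) x = f (g x) := rfl

lemma one_apply (x : V) : (1 : V ≃ₗᵢ[ℝ] V) x = x := rfl

/-- product of the simple reflections along a word -/
def wprod (l : List (Fin P.rank)) : V ≃ₗᵢ[ℝ] V := (l.map P.sr).prod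

lemma wprod_nil : P.wprod [] = 1 := rfl

lemma wprod_cons (i : Fin P.rank) (l : List (Fin P.rank)) :
    P.wprod (i :: l) = P.sr i * P.wprod l := by simp [wprod]

lemma wprod_append (l₁ l₂ : List (Fin P.rank)) :
    P.wprod (l₁ ++ l₂) = P.wprod l₁ * P.wprod l₂ := by simp [wprod]

lemma wprod_singleton (i : Fin P.rank) : P.wprod [i] = P.sr i := by
  simp [wprod]

lemma wprod_mem (l : List (Fin P.rank)) : P.wprod l ∈ P.weylGroup := by
  induction l with
  | nil => exact one_mem _
  | cons i t ih => rw [wprod_cons]; exact mul_mem (P.sr_mem i) ih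

lemma wprod_reverse (l : List (Fin P.rank)) : (P.wprod l)⁻¹ = P.wprod l.reverse := by
  induction l with
  | nil => simp [wprod_nil]
  | cons i t ih =>
    rw [wprod_cons, mul_inv_rev, ih, P.sr_inv, List.reverse_cons, wprod_append,
      wprod_singleton]

lemma sr_conj {u : V ≃ₗᵢ[ℝ] V} {i j : Fin P.rank} (h : u (P.b i) = P.b j) :
    P.sr j * u = u * P.sr i := by
  ext x
  rw [mulApp, mulApp, P.sr_apply, ← h, P.sr_apply]
  have hc : copair (u x) (u (P.b i)) = copair x (P.b i) := by
    simp [copair, LinearIsometryEquiv.inner_map_map]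
  rw [hc, map_sub, map_smul]

/-- the exchange lemma -/
lemma exchange : ∀ (l : List (Fin P.rank)) (i : Fin P.rank),
    P.wprod l (P.b i) ∉ P.posRoots →
    ∃ l' : List (Fin P.rank), l'.length + 1 ≤ l.length ∧ P.wprod l * P.sr i = P.wprod l' := by
  intro l
  induction l with
  | nil => intro i h; exact absurd (by rw [wprod_nil]; exact P.b_pos i) h
  | cons j t ih =>
    intro i h
    rw [wprod_cons, mulApp] at h
    by_cases hv : P.wprod t (P.b i) ∈ P.posRoots
    · -- then wprod t (b i) = b j
      have hbj : P.wprod t (P.b i) = P.b j := P.eq_b_of_sr_not_pos hv h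
      have hconj := P.sr_conj hbj
      refine ⟨t, by simp, ?_⟩
      rw [wprod_cons, mul_assoc, ← hconj, ← mul_assoc, P.sr_mul_self, one_mul]
    · obtain ⟨l', hlen, heq⟩ := ih i hv
      refine ⟨j :: l', by simpa using Nat.succ_le_succ hlen, ?_⟩
      rw [wprod_cons, mul_assoc, heq, wprod_cons]

lemma len_le (w : V ≃ₗᵢ[ℝ] V) (l : List (Fin P.rank)) (h : w = P.wprod l) :
    P.len w ≤ l.length := by
  apply Nat.sInf_le
  refine ⟨fun k => l.get k, ?_⟩
  rw [h, wprod]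
  congr 1
  rw [show (fun k => P.sr (l.get k)) = P.sr ∘ l.get from rfl, ← List.map_ofFn, List.ofFn_get]

lemma exists_word {w : V ≃ₗᵢ[ℝ] V} (hw : w ∈ P.weylGroup) :
    ∃ l : List (Fin P.rank), w = P.wprod l := by
  induction hw using Subgroup.closure_induction with
  | mem x hx => obtain ⟨i, rfl⟩ := hx; exact ⟨[i], (P.wprod_singleton i).symm⟩
  | one => exact ⟨[], rfl⟩
  | mul x y _ _ hx hy =>
    obtain ⟨lx, rfl⟩ := hx; obtain ⟨ly, rfl⟩ := hy
    exact ⟨lx ++ ly, (P.wprod_append lx ly).symm⟩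
  | inv x _ hx =>
    obtain ⟨lx, rfl⟩ := hx
    exact ⟨lx.reverse, P.wprod_reverse lx⟩

lemma exists_min_word {w : V ≃ₗᵢ[ℝ] V} (hw : w ∈ P.weylGroup) :
    ∃ l : List (Fin P.rank), l.length = P.len w ∧ w = P.wprod l := by
  have hne : {n | ∃ f : Fin n → Fin P.rank, w = (List.ofFn fun k => P.sr (f k)).prod}.Nonempty := by
    obtain ⟨l, rfl⟩ := P.exists_word hw
    refine ⟨l.length, fun k => l.get k, ?_⟩
    rw [wprod]
    congr 1
    rw [show (fun k => P.sr (l.get k)) = P.sr ∘ l.get from rfl, ← List.map_ofFn, List.ofFn_get]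
  obtain ⟨f, hf⟩ := Nat.sInf_mem hne
  have hwp : P.wprod (List.ofFn f) = (List.ofFn fun k => P.sr (f k)).prod := by
    rw [wprod, List.map_ofFn]; rfl
  exact ⟨List.ofFn f, by rw [List.length_ofFn]; rfl, by rw [hwp]; exact hf⟩

end Aux3
end BasedRootSystem
namespace BasedRootSystem
section Aux4
variable {V : Type*} [NormedAddCommGroup V] [InnerProductSpace ℝ V] [FiniteDimensional ℝ V]
variable (P : BasedRootSystem V)

open Classical in
/-- the inversion set of `w` -/
def invs (w : V ≃ₗᵢ[ℝ] V) : Finset V := P.posRoots.filter (fun β => w β ∉ P.posRoots)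

lemma mem_invs {w : V ≃ₗᵢ[ℝ] V} {β : V} :
    β ∈ P.invs w ↔ β ∈ P.posRoots ∧ w β ∉ P.posRoots := by
  classical
  simp [invs]

lemma invs_one : P.invs 1 = ∅ := by
  ext β; simp only [mem_invs, one_apply, Finset.notMem_empty, iff_false]
  tauto

lemma invs_mul_sr_card {w : V ≃ₗᵢ[ℝ] V} {i : Fin P.rank} (h : w (P.b i) ∈ P.posRoots) :
    (P.invs (w * P.sr i)).card = (P.invs w).card + 1 := by
  classical
  have hkey : P.invs (w * P.sr i) = insert (P.b i) ((P.invs w).image (P.sr i)) := by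
    ext β
    simp only [mem_invs, Finset.mem_insert, Finset.mem_image]
    constructor
    · rintro ⟨hβ, hneg⟩
      rw [mulApp] at hneg
      by_cases hbi : β = P.b i
      · exact Or.inl hbi
      · refine Or.inr ⟨P.sr i β, ⟨(P.sr_pos hβ hbi).1, hneg⟩, P.sr_sr i β⟩
    · rintro (rfl | ⟨γ, ⟨hγp, hγn⟩, rfl⟩)
      · refine ⟨P.b_pos i, ?_⟩
        rw [mulApp, P.sr_b_self, map_neg]
        exact fun hc => P.not_pos_and_neg h hc
      ·
        have hγi : γ ≠ P.b i := fun hc => hγn (hc ▸ h)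
        refine ⟨(P.sr_pos hγp hγi).1, ?_⟩
        rw [mulApp, P.sr_sr]
        exact hγn
  rw [hkey, Finset.card_insert_of_notMem, Finset.card_image_of_injective _
    (P.sr i).injective]
  intro hc
  obtain ⟨γ, hγ, hγe⟩ := Finset.mem_image.1 hc
  have : γ = -(P.b i) := by
    have h2 := congrArg (P.sr i) hγe
    rwa [P.sr_sr, P.sr_b_self] at h2
  exact P.not_pos_and_neg (P.b_pos i) (this ▸ (P.mem_invs.1 hγ).1)

theorem card_invs_eq_len {w : V ≃ₗᵢ[ℝ] V} (hw : w ∈ P.weylGroup) :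
    (P.invs w).card = P.len w := by
  suffices h : ∀ n : ℕ, ∀ w : V ≃ₗᵢ[ℝ] V, w ∈ P.weylGroup → P.len w = n →
      (P.invs w).card = n by exact h (P.len w) w hw rfl
  intro n
  induction n using Nat.strong_induction_on with
  | _ n ih =>
    intro w hw hlen
    obtain ⟨l, hl, hwl⟩ := P.exists_min_word hw
    match n, hlen with
    | 0, hlen =>
      have : l = [] := List.length_eq_zero_iff.1 (by rw [hl, hlen])
      rw [hwl, this, wprod_nil, invs_one, Finset.card_empty]
    | (m+1), hlen =>
      have hlne : l ≠ [] := by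
        intro hc; rw [hc] at hl; simp [hlen] at hl
      set i := l.getLast hlne with hi
      have hsplit : l.dropLast ++ [i] = l := List.dropLast_append_getLast hlne
      set w' := P.wprod l.dropLast with hw'
      have hww : w = w' * P.sr i := by
        rw [hwl, ← hsplit, wprod_append, wprod_singleton]
      have hw'mem : w' ∈ P.weylGroup := P.wprod_mem _
      have hldl : l.dropLast.length = m := by
        have := List.length_dropLast (xs := l)
        rw [hl, hlen] at this; simpa using this
      have hlw' : P.len w' = m := by
        have h1 : P.len w' ≤ m := by
          have := P.len_le w' l.dropLast rfl
          rwa [hldl] at this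
        have h2 : m ≤ P.len w' := by
          obtain ⟨l₀, hl₀, hwl₀⟩ := P.exists_min_word hw'mem
          have : w = P.wprod (l₀ ++ [i]) := by
            rw [wprod_append, wprod_singleton, ← hwl₀, ← hww]
          have hle := P.len_le w _ this
          rw [List.length_append, hl₀, List.length_singleton] at hle
          omega
        omega
      have hcard' : (P.invs w').card = m := ih m (by omega) w' hw'mem hlw'
      by_cases hpos : w' (P.b i) ∈ P.posRoots
      · rw [hww, P.invs_mul_sr_card hpos, hcard']
      · exfalso
        obtain ⟨l₀, hl₀, hwl₀⟩ := P.exists_min_word hw'mem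
        have hnp : P.wprod l₀ (P.b i) ∉ P.posRoots := by rwa [← hwl₀]
        obtain ⟨l', hl', heq⟩ := P.exchange l₀ i hnp
        have : P.len w ≤ l'.length := P.len_le w l' (by rw [hww, hwl₀, heq])
        rw [hlen] at this
        rw [hl₀, hlw'] at hl'
        omega

end Aux4
end BasedRootSystem
namespace BasedRootSystem
section Aux5
variable {V : Type*} [NormedAddCommGroup V] [InnerProductSpace ℝ V] [FiniteDimensional ℝ V]
variable (P : BasedRootSystem V)

open Classical in
/-- the set `{-(w β) | β ∈ invs w}`; these are the positive roots made negative by `w⁻¹` -/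
def mset (w : V ≃ₗᵢ[ℝ] V) : Finset V := (P.invs w).image (fun β => -(w β))

lemma mset_card (w : V ≃ₗᵢ[ℝ] V) : (P.mset w).card = (P.invs w).card := by
  classical
  exact Finset.card_image_of_injective _ (neg_injective.comp w.injective)

lemma dotZero_eq {w : V ≃ₗᵢ[ℝ] V} (hw : w ∈ P.weylGroup) :
    P.dotZero w = - ∑ β ∈ P.mset w, β := by
  classical
  set A := P.posRoots.filter (fun β => w β ∈ P.posRoots) with hA
  have hinvs : P.invs w = P.posRoots.filter (fun β => ¬ w β ∈ P.posRoots) := by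
    ext β; simp [mem_invs]
  have hsplitW : ∑ β ∈ P.posRoots, w β = (∑ β ∈ A, w β) + ∑ β ∈ P.invs w, w β := by
    rw [hinvs, hA, Finset.sum_filter_add_sum_filter_not]
  have himA : ∑ γ ∈ A.image w, γ = ∑ β ∈ A, w β :=
    Finset.sum_image (fun x _ y _ h => w.injective h)
  have himM : ∑ γ ∈ P.mset w, γ = ∑ β ∈ P.invs w, -(w β) :=
    Finset.sum_image (fun x _ y _ h => (neg_injective.comp w.injective) h)
  have hdisj : Disjoint (A.image w) (P.mset w) := by
    rw [Finset.disjoint_left]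
    rintro γ hγ1 hγ2
    obtain ⟨a, ha, rfl⟩ := Finset.mem_image.1 hγ1
    obtain ⟨c, hc, hce⟩ := Finset.mem_image.1 hγ2
    have : a = -c := w.injective (by rw [← hce, map_neg])
    have hapos : a ∈ P.posRoots := (Finset.mem_filter.1 ha).1
    have hcpos : c ∈ P.posRoots := (P.mem_invs.1 hc).1
    rw [this] at hapos
    exact P.not_pos_and_neg hcpos hapos
  have hsub : (A.image w) ∪ P.mset w ⊆ P.posRoots := by
    intro γ hγ
    rcases Finset.mem_union.1 hγ with h | h
    · obtain ⟨a, ha, rfl⟩ := Finset.mem_image.1 h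
      exact (Finset.mem_filter.1 ha).2
    · obtain ⟨c, hc, rfl⟩ := Finset.mem_image.1 h
      obtain ⟨hcp, hcn⟩ := P.mem_invs.1 hc
      exact P.neg_pos_of_not_pos (P.weyl_maps_roots hw _ (P.root_of_pos hcp)) hcn
  have hcards : ((A.image w) ∪ P.mset w).card = P.posRoots.card := by
    rw [Finset.card_union_of_disjoint hdisj, Finset.card_image_of_injective _ w.injective,
      mset_card]
    rw [hinvs, hA]
    exact Finset.card_filter_add_card_filter_not _
  have hunion : (A.image w) ∪ P.mset w = P.posRoots :=
    Finset.eq_of_subset_of_card_le hsub (le_of_eq hcards.symm)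
  have hsplitId : ∑ β ∈ P.posRoots, β = (∑ β ∈ A, w β) + ∑ β ∈ P.invs w, -(w β) := by
    rw [← hunion, Finset.sum_union hdisj, himA, himM]
  have hwrho : w P.rho = (2:ℝ)⁻¹ • ∑ β ∈ P.posRoots, w β := by
    rw [rho, map_smul, map_sum]
  have : P.dotZero w = (2:ℝ)⁻¹ • ((∑ β ∈ P.posRoots, w β) - ∑ β ∈ P.posRoots, β) := by
    rw [dotZero, hwrho, rho, smul_sub]
  rw [this, hsplitW, hsplitId]
  have hs : ((∑ β ∈ A, w β) + ∑ β ∈ P.invs w, w β) -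
      ((∑ β ∈ A, w β) + ∑ β ∈ P.invs w, -(w β)) = (2:ℝ) • ∑ β ∈ P.invs w, w β := by
    rw [Finset.sum_neg_distrib, two_smul]
    abel
  rw [hs, smul_smul]
  norm_num
  rw [himM, Finset.sum_neg_distrib, neg_neg]

lemma mem_QS_of_coeff_zero {s : Fin P.rank} {β : V}
    (hint : ∀ i, ∃ n : ℤ, P.b.repr β i = (n : ℝ)) (h0 : P.b.repr β s = 0) :
    β ∈ P.QS {i | i ≠ s} := by
  classical
  have hβeq : β = ∑ i ∈ Finset.univ.erase s, P.b.repr β i • P.b i := by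
    rw [Finset.sum_erase _ (by rw [h0, zero_smul])]
    exact (P.b.sum_repr β).symm
  rw [hβeq]
  apply AddSubgroup.sum_mem
  intro i hi
  obtain ⟨n, hn⟩ := hint i
  rw [hn, Int.cast_smul_eq_zsmul]
  have hmem : P.b i ∈ P.b '' {j | j ≠ s} := ⟨i, (Finset.mem_erase.1 hi).1, rfl⟩
  exact AddSubgroup.zsmul_mem _ (AddSubgroup.subset_closure hmem) n

lemma sub_b_mem_QS {s : Fin P.rank} {β : V} (hβ : β ∈ P.roots)
    (h1 : P.b.repr β s = 1) : β - P.b s ∈ P.QS {i | i ≠ s} := by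
  apply P.mem_QS_of_coeff_zero
  · intro i
    obtain ⟨n, hn⟩ := P.coeff_int β hβ i
    by_cases h : i = s
    · refine ⟨n - 1, ?_⟩
      subst h
      rw [map_sub, Finsupp.sub_apply, hn, Module.Basis.repr_self, Finsupp.single_apply]
      push_cast
      simp
    · refine ⟨n, ?_⟩
      rw [map_sub, Finsupp.sub_apply, hn, Module.Basis.repr_self, Finsupp.single_apply]
      simp [Ne.symm h]
  · rw [map_sub, Finsupp.sub_apply, h1, Module.Basis.repr_self, Finsupp.single_apply]
    simp

end Aux5
end BasedRootSystem

/-- If `w1, w2 ∈ W^S` have equal length, then `w1.0 - w2.0 ∈ Q_S`. -/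
theorem dotZero_sub_dotZero_mem_QS
    {V : Type*} [NormedAddCommGroup V] [InnerProductSpace ℝ V] [FiniteDimensional ℝ V]
    (P : BasedRootSystem V) (hirr : P.Irred) (s : Fin P.rank)
    (hcom : ∀ β ∈ P.posRoots, P.b.repr β s ≤ 1)
    (w1 w2 : V ≃ₗᵢ[ℝ] V)
    (hw1 : w1 ∈ P.WS {i | i ≠ s}) (hw2 : w2 ∈ P.WS {i | i ≠ s})
    (hlen : P.len w1 = P.len w2) :
    P.dotZero w1 - P.dotZero w2 ∈ P.QS {i | i ≠ s} := by
  classical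
  obtain ⟨hw1g, hw1s⟩ := hw1
  obtain ⟨hw2g, hw2s⟩ := hw2
  have key : ∀ (w : V ≃ₗᵢ[ℝ] V), w ∈ P.weylGroup →
      (∀ β ∈ P.posRoots, β ∈ P.QS {i | i ≠ s} → ∃ γ ∈ P.posRoots, w γ = β) →
      ∀ β ∈ P.mset w, β - P.b s ∈ P.QS {i | i ≠ s} := by
    intro w hwg hws β hβ
    obtain ⟨γ, hγ, rfl⟩ := Finset.mem_image.1 hβ
    obtain ⟨hγp, hγn⟩ := P.mem_invs.1 hγ
    have hroot : -(w γ) ∈ P.roots :=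
      P.neg_mem_roots (P.weyl_maps_roots hwg _ (P.root_of_pos hγp))
    have hpos : -(w γ) ∈ P.posRoots :=
      P.neg_pos_of_not_pos (P.weyl_maps_roots hwg _ (P.root_of_pos hγp)) hγn
    apply P.sub_b_mem_QS hroot
    obtain ⟨n, hn⟩ := P.coeff_int _ hroot s
    have hn0 : (0:ℝ) ≤ P.b.repr (-(w γ)) s := (P.mem_posRoots.1 hpos).2 s
    have hle : P.b.repr (-(w γ)) s ≤ 1 := hcom _ hpos
    have hne : P.b.repr (-(w γ)) s ≠ 0 := by
      intro h0
      have hQS : -(w γ) ∈ P.QS {i | i ≠ s} :=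
        P.mem_QS_of_coeff_zero (fun i => P.coeff_int _ hroot i) h0
      obtain ⟨δ, hδ, hδe⟩ := hws _ hpos hQS
      have hδγ : δ = -γ := w.injective (by rw [hδe, map_neg])
      rw [hδγ] at hδ
      exact P.not_pos_and_neg hγp hδ
    rw [hn] at hn0 hle hne ⊢
    have hone : n = 1 := by
      have h1 : 0 ≤ n := by exact_mod_cast hn0
      have h2 : n ≤ 1 := by exact_mod_cast hle
      have h3 : n ≠ 0 := by exact_mod_cast hne
      omega
    rw [hone]; norm_num
  have hcard : (P.mset w1).card = (P.mset w2).card := by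
    rw [P.mset_card, P.mset_card, P.card_invs_eq_len hw1g, P.card_invs_eq_len hw2g, hlen]
  have hm1 : (∑ β ∈ P.mset w1, β) - (P.mset w1).card • P.b s ∈ P.QS {i | i ≠ s} := by
    rw [← Finset.sum_const, ← Finset.sum_sub_distrib]
    exact AddSubgroup.sum_mem _ (fun β hβ => key w1 hw1g hw1s β hβ)
  have hm2 : (∑ β ∈ P.mset w2, β) - (P.mset w2).card • P.b s ∈ P.QS {i | i ≠ s} := by
    rw [← Finset.sum_const, ← Finset.sum_sub_distrib]
    exact AddSubgroup.sum_mem _ (fun β hβ => key w2 hw2g hw2s β hβ)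
  have heq : P.dotZero w1 - P.dotZero w2 =
      ((∑ β ∈ P.mset w2, β) - (P.mset w2).card • P.b s)
      - ((∑ β ∈ P.mset w1, β) - (P.mset w1).card • P.b s) := by
    rw [P.dotZero_eq hw1g, P.dotZero_eq hw2g, hcard]
    abel
  rw [heq]
  exact AddSubgroup.sub_mem _ hm2 hm1

end
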